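/- Let m = 2p ≥ 2 be an even integer, ζ := exp(πi/m), and let Ŵ⁺ be the group with presentation ⟨z, s₀, s₁, s_m | z² = s₀² = s₁² = s_m² = 1, (s₀s₁)² = (s₀s_m)² = (s₁s_m)^m = z, z s_i = s_i z for i ∈ {0,1,m}⟩. For δ ∈ {1, −1} and 1 ≤ j ≤ m − 1, the assignment z ↦ (−1)^j·I₂, s₀ ↦ diag(δ, (−1)^j δ), s₁ ↦ [[0, ζ^{j}], [ζ^{−j}, 0]], s_m ↦ [[0,1],[1,0]] respects the defining relations and hence extends to a group homomorphism Ŵ⁺ → GL₂(ℂ). Each of the resulting 2m − 2 two-dimensional complex representations of Ŵ⁺ is irreducible, and they are pairwise non-isomorphic. -/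

import Mathlib

/-- Generators of the double covering of `W = ℤ₂ × D_{2m}`: the central element `z`
and the lifted reflections `s₀`, `s₁`, `s_m`. -/
inductive Gen : Type
  | z | s0 | s1 | sm
deriving DecidableEq

open FreeGroup

/-- Relators of the positive double covering `Ŵ⁺` of `ℤ₂ × D_{2m}` for even `m`:
`z² = s₀² = s₁² = s_m² = 1`, `(s₀s₁)² = (s₀s_m)² = (s₁s_m)^m = z`,
and `z` commutes with the generators. -/
def relsEvenPos (m : ℕ) : Set (FreeGroup Gen) :=
  { (of Gen.z) ^ 2, (of Gen.s0) ^ 2, (of Gen.s1) ^ 2, (of Gen.sm) ^ 2,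
    (of Gen.s0 * of Gen.s1) ^ 2 * (of Gen.z)⁻¹,
    (of Gen.s0 * of Gen.sm) ^ 2 * (of Gen.z)⁻¹,
    (of Gen.s1 * of Gen.sm) ^ m * (of Gen.z)⁻¹,
    of Gen.z * of Gen.s0 * (of Gen.z)⁻¹ * (of Gen.s0)⁻¹,
    of Gen.z * of Gen.s1 * (of Gen.z)⁻¹ * (of Gen.s1)⁻¹,
    of Gen.z * of Gen.sm * (of Gen.z)⁻¹ * (of Gen.sm)⁻¹ }

/-- `ζ = exp(πi/m)`. -/
noncomputable def zeta (m : ℕ) : ℂ := Complex.exp (Real.pi * Complex.I / m)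

/-- The matrix assignment `Y_j(δ)` on the generators, for even `m`:
`z ↦ (−1)^j·I₂`, `s₀ ↦ diag(δ, (−1)^j δ)`, `s₁ ↦ [[0, ζ^j], [ζ^{−j}, 0]]`,
`s_m ↦ [[0,1],[1,0]]`. -/
noncomputable def assign (m : ℕ) : ℂ × ℕ → Gen → Matrix (Fin 2) (Fin 2) ℂ
  | (_, j), Gen.z => ((-1 : ℂ) ^ j) • (1 : Matrix (Fin 2) (Fin 2) ℂ)
  | (δ, j), Gen.s0 => !![δ, 0; 0, (-1 : ℂ) ^ j * δ]
  | (_, j), Gen.s1 => !![0, zeta m ^ j; (zeta m ^ j)⁻¹, 0]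
  | _, Gen.sm => !![0, 1; 1, 0]

/-- The admissible parameters: `δ ∈ {1, −1}` and `1 ≤ j ≤ m − 1`. -/
def ValidParam (m : ℕ) : ℂ × ℕ → Prop
  | (δ, j) => (δ = 1 ∨ δ = -1) ∧ 1 ≤ j ∧ j ≤ m - 1

/-- `φ` takes the prescribed matrix values on the generators. -/
def Extends {rels : Set (FreeGroup Gen)}
    (φ : PresentedGroup rels →* (Matrix (Fin 2) (Fin 2) ℂ)ˣ)
    (M : Gen → Matrix (Fin 2) (Fin 2) ℂ) : Prop :=
  ∀ g : Gen, (φ (PresentedGroup.of g) : Matrix (Fin 2) (Fin 2) ℂ) = M g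

/-- Irreducibility of a two-dimensional matrix representation: the only invariant
subspaces of `ℂ²` are `⊥` and `⊤`. -/
def IrredMat {G : Type*} [Group G] (φ : G →* (Matrix (Fin 2) (Fin 2) ℂ)ˣ) : Prop :=
  ∀ U : Submodule ℂ (Fin 2 → ℂ),
    (∀ g : G, ∀ x ∈ U, ((φ g : Matrix (Fin 2) (Fin 2) ℂ)).mulVec x ∈ U) → U = ⊥ ∨ U = ⊤

/-- Isomorphism of matrix representations: simultaneous conjugation. -/
def MatIso {G : Type*} [Group G] (φ ψ : G →* (Matrix (Fin 2) (Fin 2) ℂ)ˣ) : Prop :=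
  ∃ S : (Matrix (Fin 2) (Fin 2) ℂ)ˣ, ∀ g : G, φ g = S * ψ g * S⁻¹

/-! ### Auxiliary lemmas about `ζ` -/

lemma zeta_pow_eq (m j : ℕ) (hm : m ≠ 0) :
    zeta m ^ j = Complex.exp ((Real.pi * j / m : ℝ) * Complex.I) := by
  rw [zeta, ← Complex.exp_nat_mul]
  congr 1
  have : (m : ℂ) ≠ 0 := Nat.cast_ne_zero.mpr hm
  push_cast
  field_simp

lemma zeta_pow_ne_zero (m j : ℕ) : zeta m ^ j ≠ 0 :=
  pow_ne_zero _ (Complex.exp_ne_zero _)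

lemma theta_mem (m j : ℕ) (h1 : 1 ≤ j) (h2 : j < m) :
    0 < Real.pi * j / m ∧ Real.pi * j / m < Real.pi := by
  have hm0 : 0 < m := lt_of_le_of_lt (Nat.zero_le _) h2
  have hm : (0:ℝ) < m := by exact_mod_cast hm0
  have hj : (0:ℝ) < j := by exact_mod_cast h1
  constructor
  · positivity
  · rw [div_lt_iff₀ hm]
    have : (j:ℝ) < m := by exact_mod_cast h2
    nlinarith [Real.pi_pos]

lemma zeta_pow_sq_ne_one (m j : ℕ) (h1 : 1 ≤ j) (h2 : j < m) :
    (zeta m ^ j) ^ 2 ≠ 1 := by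
  have hm : m ≠ 0 := by omega
  intro h
  have him : (zeta m ^ j).im = Real.sin (Real.pi * j / m) := by
    rw [zeta_pow_eq m j hm, Complex.exp_ofReal_mul_I_im]
  obtain ⟨ht1, ht2⟩ := theta_mem m j h1 h2
  have hs : 0 < Real.sin (Real.pi * j / m) := Real.sin_pos_of_pos_of_lt_pi ht1 ht2
  have : zeta m ^ j = 1 ∨ zeta m ^ j = -1 := by
    rcases mul_eq_zero.mp (show (zeta m ^ j - 1) * (zeta m ^ j + 1) = 0 by
      ring_nf; linear_combination h) with h' | h'
    · left; linear_combination h'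
    · right; linear_combination h'
  rcases this with h' | h' <;> rw [h'] at him <;> simp at him <;> linarith

lemma zeta_pow_pow_m (m j : ℕ) (hm : m ≠ 0) : (zeta m ^ j) ^ m = (-1 : ℂ) ^ j := by
  rw [← pow_mul, mul_comm j m, pow_mul, zeta, ← Complex.exp_nat_mul]
  have : (m : ℂ) ≠ 0 := Nat.cast_ne_zero.mpr hm
  rw [show (m : ℂ) * (Real.pi * Complex.I / m) = Real.pi * Complex.I by field_simp,
    Complex.exp_pi_mul_I]

lemma zeta_trace (m j : ℕ) (hm : m ≠ 0) :
    zeta m ^ j + (zeta m ^ j)⁻¹ = 2 * (Real.cos (Real.pi * j / m) : ℂ) := by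
  rw [zeta_pow_eq m j hm, ← Complex.exp_neg]
  rw [Complex.exp_mul_I,
    show -((Real.pi * j / m : ℝ) * Complex.I) = (-(Real.pi * j / m) : ℝ) * Complex.I by
      push_cast; ring, Complex.exp_mul_I]
  push_cast
  rw [Complex.cos_neg, Complex.sin_neg]
  ring

lemma zeta_inv_sub_ne_zero (m j : ℕ) (h1 : 1 ≤ j) (h2 : j < m) :
    (zeta m ^ j)⁻¹ - zeta m ^ j ≠ 0 := by
  intro h
  apply zeta_pow_sq_ne_one m j h1 h2
  have h' : (zeta m ^ j)⁻¹ = zeta m ^ j := sub_eq_zero.mp h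
  rw [pow_two]
  nth_rewrite 1 [← h']
  exact inv_mul_cancel₀ (zeta_pow_ne_zero m j)

/-! ### The generator matrices are involutions -/

lemma sq_assign (m : ℕ) (δ : ℂ) (j : ℕ) (hδ : δ = 1 ∨ δ = -1) (g : Gen) :
    assign m (δ, j) g * assign m (δ, j) g = 1 := by
  have hδ2 : δ * δ = 1 := by rcases hδ with h | h <;> rw [h] <;> norm_num
  have hn : ((-1 : ℂ) ^ j) * ((-1 : ℂ) ^ j) = 1 := by
    rw [← mul_pow]; norm_num
  have ha := zeta_pow_ne_zero m j
  cases g with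
  | z =>
    show ((-1 : ℂ) ^ j • 1) * ((-1 : ℂ) ^ j • 1) = (1 : Matrix (Fin 2) (Fin 2) ℂ)
    rw [Matrix.smul_mul, Matrix.mul_smul, smul_smul, hn, one_smul, one_mul]
  | s0 =>
    show !![δ, 0; 0, (-1 : ℂ) ^ j * δ] * !![δ, 0; 0, (-1 : ℂ) ^ j * δ] = 1
    rw [Matrix.mul_fin_two, Matrix.one_fin_two]
    ext i k
    fin_cases i <;> fin_cases k <;> simp <;>
      first
        | linear_combination hδ2
        | linear_combination (δ * δ) * hn + hδ2
  | s1 =>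
    show !![0, zeta m ^ j; (zeta m ^ j)⁻¹, 0] * !![0, zeta m ^ j; (zeta m ^ j)⁻¹, 0] = 1
    rw [Matrix.mul_fin_two, Matrix.one_fin_two,
      mul_inv_cancel₀ ha, inv_mul_cancel₀ ha]
    norm_num
  | sm =>
    show !![0, (1:ℂ); 1, 0] * !![0, 1; 1, 0] = 1
    rw [Matrix.mul_fin_two, Matrix.one_fin_two]
    norm_num


lemma smul_one_fin_two (c : ℂ) : c • (1 : Matrix (Fin 2) (Fin 2) ℂ) = !![c, 0; 0, c] := by
  rw [Matrix.one_fin_two]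
  ext i k
  fin_cases i <;> fin_cases k <;> simp

lemma diag_fin_two (a b : ℂ) : Matrix.diagonal ![a, b] = !![a, 0; 0, b] := by
  ext i k
  fin_cases i <;> fin_cases k <;> simp [Matrix.diagonal]

/-- The generator matrices as units. -/
noncomputable def fGen (m : ℕ) (δ : ℂ) (j : ℕ) (hδ : δ = 1 ∨ δ = -1) (g : Gen) :
    (Matrix (Fin 2) (Fin 2) ℂ)ˣ :=
  ⟨assign m (δ, j) g, assign m (δ, j) g, sq_assign m δ j hδ g, sq_assign m δ j hδ g⟩

lemma exists_hom (m : ℕ) (hm : m ≠ 0) (δ : ℂ) (j : ℕ) (hδ : δ = 1 ∨ δ = -1) :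
    ∃ φ : PresentedGroup (relsEvenPos m) →* (Matrix (Fin 2) (Fin 2) ℂ)ˣ,
      Extends φ (assign m (δ, j)) := by
  classical
  set F := fGen m δ j hδ with hF
  have hFval : ∀ g, (F g : Matrix (Fin 2) (Fin 2) ℂ) = assign m (δ, j) g := fun g => rfl
  have hsq : ∀ g, F g * F g = 1 := fun g => Units.ext (sq_assign m δ j hδ g)
  have hinv : ∀ g, (F g)⁻¹ = F g := fun g => inv_eq_of_mul_eq_one_right (hsq g)
  have hδ2 : δ * δ = 1 := by rcases hδ with h | h <;> rw [h] <;> norm_num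
  have hn : ((-1 : ℂ) ^ j) * ((-1 : ℂ) ^ j) = 1 := by rw [← mul_pow]; norm_num
  have ha0 := zeta_pow_ne_zero m j
  set a := zeta m ^ j with haa
  -- commutation helper
  have hcomm : ∀ g, F Gen.z * F g * (F Gen.z)⁻¹ * (F g)⁻¹ = 1 := by
    intro g
    rw [hinv, hinv]
    apply Units.ext
    show assign m (δ, j) Gen.z * assign m (δ, j) g * assign m (δ, j) Gen.z
        * assign m (δ, j) g = 1
    have hz : assign m (δ, j) Gen.z = ((-1 : ℂ) ^ j) • 1 := rfl
    rw [hz, Matrix.smul_mul, Matrix.smul_mul, Matrix.mul_smul, one_mul, smul_smul, hn,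
      one_smul, mul_assoc]
    rw [one_mul]
    exact sq_assign m δ j hδ g
  have hrels : ∀ r ∈ relsEvenPos m, FreeGroup.lift F r = 1 := by
    intro r hr
    simp only [relsEvenPos, Set.mem_insert_iff, Set.mem_singleton_iff] at hr
    rcases hr with rfl | rfl | rfl | rfl | rfl | rfl | rfl | rfl | rfl | rfl <;>
      simp only [_root_.map_mul, map_pow, _root_.map_inv, FreeGroup.lift_apply_of]
    · rw [pow_two]; exact hsq _
    · rw [pow_two]; exact hsq _
    · rw [pow_two]; exact hsq _
    · rw [pow_two]; exact hsq _
    · -- (s0 s1)^2 = z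
      rw [mul_inv_eq_one]
      apply Units.ext
      rw [Units.val_pow_eq_pow_val, Units.val_mul, hFval, hFval, hFval]
      show (!![δ, 0; 0, (-1 : ℂ) ^ j * δ] * !![0, a; a⁻¹, 0]) ^ 2
          = ((-1 : ℂ) ^ j) • 1
      rw [pow_two, Matrix.mul_fin_two, Matrix.mul_fin_two, smul_one_fin_two]
      ext i k
      fin_cases i <;> fin_cases k <;> simp <;> ring_nf <;>
        first
          | linear_combination ((-1:ℂ)^j * δ * δ) * (mul_inv_cancel₀ ha0)
              + ((-1:ℂ)^j) * hδ2
          | linear_combination ((-1:ℂ)^j * δ * δ) * (inv_mul_cancel₀ ha0)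
              + ((-1:ℂ)^j) * hδ2
    · -- (s0 sm)^2 = z
      rw [mul_inv_eq_one]
      apply Units.ext
      rw [Units.val_pow_eq_pow_val, Units.val_mul, hFval, hFval, hFval]
      show (!![δ, 0; 0, (-1 : ℂ) ^ j * δ] * !![0, 1; 1, 0]) ^ 2
          = ((-1 : ℂ) ^ j) • 1
      rw [pow_two, Matrix.mul_fin_two, Matrix.mul_fin_two, smul_one_fin_two]
      ext i k
      fin_cases i <;> fin_cases k <;> simp <;> ring_nf <;>
        linear_combination ((-1:ℂ)^j) * hδ2
    · -- (s1 sm)^m = z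
      rw [mul_inv_eq_one]
      apply Units.ext
      rw [Units.val_pow_eq_pow_val, Units.val_mul, hFval, hFval, hFval]
      show (!![0, a; a⁻¹, 0] * !![0, 1; 1, 0]) ^ m = ((-1 : ℂ) ^ j) • 1
      rw [Matrix.mul_fin_two]
      have h1 : (!![(0:ℂ) * 0 + a * 1, 0 * 1 + a * 0; a⁻¹ * 0 + 0 * 1, a⁻¹ * 1 + 0 * 0])
          = Matrix.diagonal ![a, a⁻¹] := by
        rw [diag_fin_two]; norm_num
      rw [h1, Matrix.diagonal_pow, smul_one_fin_two, ← diag_fin_two]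
      have h2 : (![a, a⁻¹] : Fin 2 → ℂ) ^ m = ![(-1 : ℂ) ^ j, (-1 : ℂ) ^ j] := by
        funext i
        fin_cases i <;> simp only [Pi.pow_apply]
        · show a ^ m = (-1 : ℂ) ^ j
          exact zeta_pow_pow_m m j hm
        · show a⁻¹ ^ m = (-1 : ℂ) ^ j
          rw [inv_pow, zeta_pow_pow_m m j hm, ← inv_pow]
          norm_num
      rw [h2]
    · exact hcomm Gen.s0
    · exact hcomm Gen.s1
    · exact hcomm Gen.sm
  refine ⟨PresentedGroup.toGroup hrels, fun g => ?_⟩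
  rw [PresentedGroup.toGroup.of]
  rfl


lemma irred_of_extends {rels : Set (FreeGroup Gen)} (m j : ℕ) (δ : ℂ)
    (h1 : 1 ≤ j) (h2 : j < m)
    (φ : PresentedGroup rels →* (Matrix (Fin 2) (Fin 2) ℂ)ˣ)
    (hφ : Extends φ (assign m (δ, j))) : IrredMat φ := by
  intro U hU
  by_cases hbot : U = ⊥
  · left; exact hbot
  right
  obtain ⟨x, hxU, hx⟩ := (Submodule.ne_bot_iff U).mp hbot
  set a := zeta m ^ j with haa
  have ha0 : a ≠ 0 := zeta_pow_ne_zero m j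
  have hsub : a⁻¹ - a ≠ 0 := zeta_inv_sub_ne_zero m j h1 h2
  have hsq1 : (1 : ℂ) - a * a ≠ 0 := by
    intro h
    apply hsub
    have h' : a⁻¹ - a = a⁻¹ * (1 - a * a) := by field_simp
    rw [h', h, mul_zero]
  have vm : ∀ y : Fin 2 → ℂ, (!![0, (1:ℂ); 1, 0]).mulVec y = ![y 1, y 0] := by
    intro y; funext i
    fin_cases i <;> simp [Matrix.mulVec, dotProduct, Fin.sum_univ_two]
  have v1 : ∀ y : Fin 2 → ℂ, (!![0, a; a⁻¹, 0]).mulVec y = ![a * y 1, a⁻¹ * y 0] := by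
    intro y; funext i
    fin_cases i <;> simp [Matrix.mulVec, dotProduct, Fin.sum_univ_two]
  have hUm : ∀ y ∈ U, (![y 1, y 0] : Fin 2 → ℂ) ∈ U := by
    intro y hy
    have := hU (PresentedGroup.of Gen.sm) y hy
    rwa [hφ Gen.sm, show assign m (δ, j) Gen.sm = !![0, (1:ℂ); 1, 0] from rfl, vm] at this
  have hU1 : ∀ y ∈ U, (![a * y 1, a⁻¹ * y 0] : Fin 2 → ℂ) ∈ U := by
    intro y hy
    have := hU (PresentedGroup.of Gen.s1) y hy
    rwa [hφ Gen.s1, show assign m (δ, j) Gen.s1 = !![0, a; a⁻¹, 0] from rfl, v1] at this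
  have he1 : (![0, 1] : Fin 2 → ℂ) ∈ U := by
    by_cases h0 : x 0 = 0
    · have hx1 : x 1 ≠ 0 := by
        intro h1'
        apply hx
        funext i; fin_cases i <;> simp [h0, h1']
      have hmem : (x 1)⁻¹ • x ∈ U := U.smul_mem _ hxU
      have : (![0, 1] : Fin 2 → ℂ) = (x 1)⁻¹ • x := by
        funext i; fin_cases i <;> simp [h0, inv_mul_cancel₀ hx1]
      rwa [this]
    · -- y := S1 x - a • Sm x = ![0, (a⁻¹ - a) * x 0]
      have hy : (![a * x 1, a⁻¹ * x 0] - a • ![x 1, x 0] : Fin 2 → ℂ) ∈ U :=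
        U.sub_mem (hU1 x hxU) (U.smul_mem _ (hUm x hxU))
      have hyv : (![a * x 1, a⁻¹ * x 0] - a • ![x 1, x 0] : Fin 2 → ℂ)
          = ![0, (a⁻¹ - a) * x 0] := by
        funext i; fin_cases i <;> simp <;> ring
      rw [hyv] at hy
      have hc : (a⁻¹ - a) * x 0 ≠ 0 := mul_ne_zero hsub h0
      have hmem : ((a⁻¹ - a) * x 0)⁻¹ • (![0, (a⁻¹ - a) * x 0] : Fin 2 → ℂ) ∈ U :=
        U.smul_mem _ hy
      have : (![0, 1] : Fin 2 → ℂ) = ((a⁻¹ - a) * x 0)⁻¹ • ![0, (a⁻¹ - a) * x 0] := by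
        funext i; fin_cases i <;> simp <;> field_simp [show (1:ℂ) - a ^ 2 ≠ 0 by rwa [pow_two]] <;> ring
      rwa [this]
  have he0 : (![1, 0] : Fin 2 → ℂ) ∈ U := by
    have := hUm _ he1
    simpa using this
  rw [Submodule.eq_top_iff']
  intro v
  have hv : v = v 0 • (![1, 0] : Fin 2 → ℂ) + v 1 • ![0, 1] := by
    funext i; fin_cases i <;> simp
  rw [hv]
  exact U.add_mem (U.smul_mem _ he0) (U.smul_mem _ he1)


lemma trace_eq_of_matIso {G : Type*} [Group G] (φ ψ : G →* (Matrix (Fin 2) (Fin 2) ℂ)ˣ)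
    (h : MatIso φ ψ) (g : G) :
    Matrix.trace (φ g : Matrix (Fin 2) (Fin 2) ℂ)
      = Matrix.trace (ψ g : Matrix (Fin 2) (Fin 2) ℂ) := by
  obtain ⟨S, hS⟩ := h
  rw [hS g, Units.val_mul, Units.val_mul, Matrix.trace_mul_comm, ← mul_assoc,
    ← Units.val_mul, inv_mul_cancel, Units.val_one, one_mul]

lemma noniso (m : ℕ) (hm : m ≠ 0) (δ δ' : ℂ) (j j' : ℕ)
    (hδ : δ = 1 ∨ δ = -1) (hδ' : δ' = 1 ∨ δ' = -1)
    (hj1 : 1 ≤ j) (hj2 : j < m) (hj1' : 1 ≤ j') (hj2' : j' < m)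
    (hne : ((δ, j) : ℂ × ℕ) ≠ (δ', j'))
    (φ ψ : PresentedGroup (relsEvenPos m) →* (Matrix (Fin 2) (Fin 2) ℂ)ˣ)
    (hφ : Extends φ (assign m (δ, j))) (hψ : Extends ψ (assign m (δ', j'))) :
    ¬ MatIso φ ψ := by
  intro hiso
  set a := zeta m ^ j with haa
  set b := zeta m ^ j' with hbb
  have t1 : Matrix.trace
      ((φ (PresentedGroup.of Gen.s1 * PresentedGroup.of Gen.sm) :
        Matrix (Fin 2) (Fin 2) ℂ)) = a + a⁻¹ := by
    rw [_root_.map_mul, Units.val_mul, hφ Gen.s1, hφ Gen.sm]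
    show Matrix.trace (!![0, a; a⁻¹, 0] * !![0, 1; 1, 0]) = a + a⁻¹
    rw [Matrix.mul_fin_two, Matrix.trace_fin_two_of]; ring
  have t1' : Matrix.trace
      ((ψ (PresentedGroup.of Gen.s1 * PresentedGroup.of Gen.sm) :
        Matrix (Fin 2) (Fin 2) ℂ)) = b + b⁻¹ := by
    rw [_root_.map_mul, Units.val_mul, hψ Gen.s1, hψ Gen.sm]
    show Matrix.trace (!![0, b; b⁻¹, 0] * !![0, 1; 1, 0]) = b + b⁻¹
    rw [Matrix.mul_fin_two, Matrix.trace_fin_two_of]; ring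
  have hj : j = j' := by
    have heq := trace_eq_of_matIso φ ψ hiso
      (PresentedGroup.of Gen.s1 * PresentedGroup.of Gen.sm)
    rw [t1, t1', haa, hbb, zeta_trace m j hm, zeta_trace m j' hm] at heq
    have hcosC : ((Real.cos (Real.pi * j / m) : ℝ) : ℂ)
        = ((Real.cos (Real.pi * j' / m) : ℝ) : ℂ) := by linear_combination heq / 2
    have hcos : Real.cos (Real.pi * j / m) = Real.cos (Real.pi * j' / m) :=
      Complex.ofReal_inj.mp hcosC
    obtain ⟨ht1, ht2⟩ := theta_mem m j hj1 hj2
    obtain ⟨ht1', ht2'⟩ := theta_mem m j' hj1' hj2'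
    have hθ : Real.pi * j / m = Real.pi * j' / m :=
      Real.injOn_cos ⟨ht1.le, ht2.le⟩ ⟨ht1'.le, ht2'.le⟩ hcos
    have hmR : (m : ℝ) ≠ 0 := Nat.cast_ne_zero.mpr hm
    have : (j : ℝ) = (j' : ℝ) := by
      rw [div_left_inj' hmR] at hθ
      exact mul_left_cancel₀ Real.pi_ne_zero hθ
    exact_mod_cast this
  subst hj
  have hδδ : δ ≠ δ' := fun h => hne (by rw [h])
  rcases Nat.even_or_odd j with he | ho
  · have t0 : Matrix.trace ((φ (PresentedGroup.of Gen.s0) :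
        Matrix (Fin 2) (Fin 2) ℂ)) = 2 * δ := by
      rw [hφ Gen.s0]
      show Matrix.trace !![δ, 0; 0, (-1 : ℂ) ^ j * δ] = 2 * δ
      rw [Matrix.trace_fin_two_of, he.neg_one_pow]; ring
    have t0' : Matrix.trace ((ψ (PresentedGroup.of Gen.s0) :
        Matrix (Fin 2) (Fin 2) ℂ)) = 2 * δ' := by
      rw [hψ Gen.s0]
      show Matrix.trace !![δ', 0; 0, (-1 : ℂ) ^ j * δ'] = 2 * δ'
      rw [Matrix.trace_fin_two_of, he.neg_one_pow]; ring
    have heq := trace_eq_of_matIso φ ψ hiso (PresentedGroup.of Gen.s0)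
    rw [t0, t0'] at heq
    exact hδδ (by linear_combination heq / 2)
  · have ha0 : a ≠ 0 := zeta_pow_ne_zero m j
    have hsub : a - a⁻¹ ≠ 0 := by
      have := zeta_inv_sub_ne_zero m j hj1 hj2
      intro h; apply this; rw [← haa] at *; linear_combination -h
    have t2 : Matrix.trace ((φ (PresentedGroup.of Gen.s0 * PresentedGroup.of Gen.s1
        * PresentedGroup.of Gen.sm) : Matrix (Fin 2) (Fin 2) ℂ)) = δ * (a - a⁻¹) := by
      rw [_root_.map_mul, _root_.map_mul, Units.val_mul, Units.val_mul,
        hφ Gen.s0, hφ Gen.s1, hφ Gen.sm]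
      show Matrix.trace (!![δ, 0; 0, (-1 : ℂ) ^ j * δ] * !![0, a; a⁻¹, 0]
        * !![0, 1; 1, 0]) = δ * (a - a⁻¹)
      rw [Matrix.mul_fin_two, Matrix.mul_fin_two, Matrix.trace_fin_two_of,
        ho.neg_one_pow]
      ring
    have t2' : Matrix.trace ((ψ (PresentedGroup.of Gen.s0 * PresentedGroup.of Gen.s1
        * PresentedGroup.of Gen.sm) : Matrix (Fin 2) (Fin 2) ℂ)) = δ' * (a - a⁻¹) := by
      rw [_root_.map_mul, _root_.map_mul, Units.val_mul, Units.val_mul,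
        hψ Gen.s0, hψ Gen.s1, hψ Gen.sm]
      show Matrix.trace (!![δ', 0; 0, (-1 : ℂ) ^ j * δ'] * !![0, a; a⁻¹, 0]
        * !![0, 1; 1, 0]) = δ' * (a - a⁻¹)
      rw [Matrix.mul_fin_two, Matrix.mul_fin_two, Matrix.trace_fin_two_of,
        ho.neg_one_pow]
      ring
    have heq := trace_eq_of_matIso φ ψ hiso
      (PresentedGroup.of Gen.s0 * PresentedGroup.of Gen.s1 * PresentedGroup.of Gen.sm)
    rw [t2, t2'] at heq
    have : (δ - δ') * (a - a⁻¹) = 0 := by linear_combination heq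
    rcases mul_eq_zero.mp this with h | h
    · exact hδδ (by linear_combination h)
    · exact hsub h

/-- Theorem A.3 of the paper (even case, positive covering), two-dimensional
representations: for each `δ ∈ {1, −1}` and `1 ≤ j ≤ m − 1` the prescribed matrix
assignment respects the defining relations, hence extends to a group homomorphism
`Ŵ⁺ → GL₂(ℂ)`; each of the resulting `2m − 2` representations is irreducible, and
representations with distinct parameters are non-isomorphic. -/
theorem WposEven_two_dim_irreps (m p : ℕ) (hp : 1 ≤ p) (hm : m = 2 * p) :
    (∀ c, ValidParam m c →
      ∃ φ : PresentedGroup (relsEvenPos m) →* (Matrix (Fin 2) (Fin 2) ℂ)ˣ,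
        Extends φ (assign m c)) ∧
    (∀ c, ValidParam m c →
      ∀ φ : PresentedGroup (relsEvenPos m) →* (Matrix (Fin 2) (Fin 2) ℂ)ˣ,
        Extends φ (assign m c) → IrredMat φ) ∧
    (∀ c c', ValidParam m c → ValidParam m c' → c ≠ c' →
      ∀ φ ψ : PresentedGroup (relsEvenPos m) →* (Matrix (Fin 2) (Fin 2) ℂ)ˣ,
        Extends φ (assign m c) → Extends ψ (assign m c') → ¬ MatIso φ ψ) := by
  refine ⟨?_, ?_, ?_⟩
  · rintro ⟨δ, j⟩ ⟨hδ, hj1, hj2⟩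
    exact exists_hom m (by omega) δ j hδ
  · rintro ⟨δ, j⟩ ⟨hδ, hj1, hj2⟩ φ hφ
    exact irred_of_extends m j δ hj1 (by omega) φ hφ
  · rintro ⟨δ, j⟩ ⟨δ', j'⟩ ⟨hδ, hj1, hj2⟩ ⟨hδ', hj1', hj2'⟩ hne φ ψ hφ hψ
    exact noniso m (by omega) δ δ' j j' hδ hδ' hj1 (by omega) hj1' (by omega) hne φ ψ hφ hψ
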